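/- Consider a finite set A of agents with continuous-time infection times T̃ⱼ ∈ [0,∞] defined by: some agent i₀ has T̃_{i₀} = 0, and for j ≠ i₀, T̃ⱼ = inf over agents i ≠ j and times t ≥ T̃ᵢ such that [t, t+ρ] ⊆ N(i,j), of t + ρ, where N(i,j) ⊆ [0,∞) is the (arbitrary) set of connection times between i and j and ρ > 0. Let a discrete scheme with time step dt < ρ define values T^{(I)}_{j,k} by: T^{(I)}_{j,0} = T̃ⱼ-initial (0 for i₀, ∞ otherwise), and at step k, for each i with kdt ≥ T^{(I)}_{i,k−1} and each j connected to i at time kdt, if the connection interval containing kdt, intersected with [T^{(I)}_{i,k−1}, ∞), has length ≥ ρ and left endpoint t₁, then T^{(I)}_{j,k} is updated to min of its current value and t₁ + ρ. Assume each N(i,j) is a union of intervals and the scheme correctly computes the maximal connection interval containing kdt whenever i,j are connected at kdt. Then for every k ∈ ℕ and every agent j: T̃ⱼ ≤ T^{(I)}_{j,k−1}, and if T̃ⱼ ≤ kdt then T̃ⱼ = T^{(I)}_{j,k−1}. -/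

import Mathlib

open Set ENNReal

/-- Lemma 7 (`lem:correctness`): inductive invariant of the discrete-time ABM.

`A` is a finite set of agents with initially infected agent `i0`, `ρ` the transmission time,
`dt < ρ` the time step, `Ncon i j` the set of connection times of `i` and `j`.
`Ttil j ∈ [0,∞]` are the continuous-time infection times, characterized by the infimum
equation below.  The discrete scheme produces values `T k j`; at step `k ≥ 1`, for every
infected agent `i` (i.e. `T (k-1) i ≤ kdt`) connected to `j` at time `kdt`, it considers the
maximal connection interval `[a i j k, b i j k]` containing `kdt`, truncates it on the left
at `t₁ = max (a i j k) (T (k-1) i)`, and if its length is `≥ ρ`, updates `T k j` with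
`t₁ + ρ`.  Then for every `k` and `j`: `Ttil j ≤ T (k-1) j`, and if `Ttil j ≤ kdt` then
`Ttil j = T (k-1) j` (with `T (0-1) := T 0`). -/
theorem stmt_12
    (A : Type) [Fintype A] [DecidableEq A] (i0 : A)
    (ρ dt : ℝ) (hρ : 0 < ρ) (hdt : 0 < dt) (hdtρ : dt < ρ)
    (Ncon : A → A → Set ℝ)
    (Ttil : A → ℝ≥0∞)
    (hTtil0 : Ttil i0 = 0)
    (hTtil : ∀ j, j ≠ i0 →
      Ttil j = sInf {x : ℝ≥0∞ | ∃ i, i ≠ j ∧ ∃ t : ℝ, 0 ≤ t ∧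
        Ttil i ≤ ENNReal.ofReal t ∧ Icc t (t + ρ) ⊆ Ncon i j ∧
        x = ENNReal.ofReal (t + ρ)})
    (T : ℕ → A → ℝ≥0∞)
    (hT0 : ∀ j, T 0 j = if j = i0 then 0 else ⊤)
    -- `a i j k, b i j k` is the maximal connection interval of `i` and `j` containing `k·dt`
    (a b : A → A → ℕ → ℝ)
    (hab : ∀ i j (k : ℕ), ((k : ℝ) * dt) ∈ Ncon i j →
      a i j k ≤ (k : ℝ) * dt ∧ (k : ℝ) * dt ≤ b i j k ∧
      Icc (a i j k) (b i j k) ⊆ Ncon i j ∧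
      (∀ c d : ℝ, c ≤ (k : ℝ) * dt → (k : ℝ) * dt ≤ d → Icc c d ⊆ Ncon i j →
        a i j k ≤ c ∧ d ≤ b i j k))
    -- the step update of the discrete scheme
    (hstep : ∀ k : ℕ, 1 ≤ k → ∀ j,
      T k j = min (T (k - 1) j)
        (sInf {x : ℝ≥0∞ | ∃ i, i ≠ j ∧
          T (k - 1) i ≤ ENNReal.ofReal ((k : ℝ) * dt) ∧
          ((k : ℝ) * dt) ∈ Ncon i j ∧
          ∃ t₁ : ℝ, t₁ = max (a i j k) (T (k - 1) i).toReal ∧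
            ρ ≤ b i j k - t₁ ∧ x = ENNReal.ofReal (t₁ + ρ)})) :
    ∀ k : ℕ, ∀ j,
      Ttil j ≤ T (k - 1) j ∧
      (Ttil j ≤ ENNReal.ofReal ((k : ℝ) * dt) → Ttil j = T (k - 1) j) := by

  -- Every agent other than `i0` has infection time at least `ρ`.
  have hρle : ∀ j, j ≠ i0 → ENNReal.ofReal ρ ≤ Ttil j := by
    intro j hj
    rw [hTtil j hj]
    refine le_sInf ?_
    rintro x ⟨i, -, t, ht0, -, -, rfl⟩
    exact ENNReal.ofReal_le_ofReal (by linarith)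
  -- The main inductive invariant, reindexed.
  have key : ∀ k : ℕ, ∀ j, Ttil j ≤ T k j ∧
      (Ttil j ≤ ENNReal.ofReal (((k : ℝ) + 1) * dt) → Ttil j = T k j) := by
    intro k
    induction k with
    | zero =>
      intro j
      rw [hT0 j]
      by_cases hj : j = i0
      · subst hj; simp [hTtil0]
      · simp only [if_neg hj]
        refine ⟨le_top, fun h => ?_⟩
        have hlt : Ttil j ≤ ENNReal.ofReal dt := h.trans (le_of_eq (by norm_num))
        exact absurd (hlt.trans_lt ((ENNReal.ofReal_lt_ofReal_iff hρ).mpr hdtρ))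
          (not_lt.mpr (hρle j hj))
    | succ k ih =>
      have hs : ∀ j, T (k + 1) j = min (T k j)
          (sInf {x : ℝ≥0∞ | ∃ i, i ≠ j ∧
            T k i ≤ ENNReal.ofReal (((k + 1 : ℕ) : ℝ) * dt) ∧
            (((k + 1 : ℕ) : ℝ) * dt) ∈ Ncon i j ∧
            ∃ t₁ : ℝ, t₁ = max (a i j (k + 1)) (T k i).toReal ∧
              ρ ≤ b i j (k + 1) - t₁ ∧ x = ENNReal.ofReal (t₁ + ρ)}) := by
        intro j
        have := hstep (k + 1) (by omega) j
        simpa only [Nat.add_sub_cancel] using this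
      have hM0 : (0 : ℝ) ≤ ((k + 1 : ℕ) : ℝ) * dt := by positivity
      have hMeq : ((k + 1 : ℕ) : ℝ) * dt = ((k : ℝ) + 1) * dt := by push_cast; ring
      -- Part A : Ttil j ≤ T (k+1) j for all j
      have hA : ∀ j, Ttil j ≤ T (k + 1) j := by
        intro j
        rw [hs j]
        refine le_min (ih j).1 (le_sInf ?_)
        rintro x ⟨i, hij, hTki, hmem, t₁, ht₁, hρb, rfl⟩
        by_cases hj : j = i0
        · subst hj; rw [hTtil0]; exact zero_le
        rw [hTtil j hj]
        have hfin : T k i ≠ ⊤ := ne_top_of_le_ne_top ENNReal.ofReal_ne_top hTki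
        obtain ⟨ha, hb, hsub, hmax⟩ := hab i j (k + 1) hmem
        refine sInf_le ⟨i, hij, t₁, ?_, ?_, ?_, rfl⟩
        · exact le_trans ENNReal.toReal_nonneg (ht₁ ▸ le_max_right _ _)
        · calc Ttil i ≤ T k i := (ih i).1
            _ = ENNReal.ofReal (T k i).toReal := (ENNReal.ofReal_toReal hfin).symm
            _ ≤ ENNReal.ofReal t₁ :=
              ENNReal.ofReal_le_ofReal (ht₁ ▸ le_max_right _ _)
        · refine (Icc_subset_Icc (ht₁ ▸ le_max_left _ _) (by linarith)).trans hsub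
      intro j
      refine ⟨hA j, fun hle => ?_⟩
      by_cases hcase : Ttil j ≤ ENNReal.ofReal (((k : ℝ) + 1) * dt)
      · -- already infected by time (k+1)dt : use the IH equality
        have heq := (ih j).2 hcase
        refine le_antisymm (hA j) ?_
        rw [heq, hs j]
        exact min_le_left _ _
      · -- new infection in the time slot ((k+1)dt, (k+2)dt]
        push_neg at hcase
        have hji0 : j ≠ i0 := by
          rintro rfl
          rw [hTtil0] at hcase
          exact absurd hcase (not_lt.mpr zero_le)
        have hjfin : Ttil j ≠ ⊤ :=
          ne_top_of_le_ne_top ENNReal.ofReal_ne_top hle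
        refine le_antisymm (hA j) ?_
        refine ENNReal.le_of_forall_pos_le_add ?_
        intro ε hε hfin
        set δ : ℝ≥0∞ := min (ε : ℝ≥0∞) (ENNReal.ofReal (ρ - dt)) with hδdef
        have hδpos : δ ≠ 0 := by
          have h1 : (0 : ℝ≥0∞) < ε := by exact_mod_cast hε
          have h2 : (0 : ℝ≥0∞) < ENNReal.ofReal (ρ - dt) :=
            ENNReal.ofReal_pos.mpr (by linarith)
          exact (lt_min h1 h2).ne' 
        have hδε : δ ≤ (ε : ℝ≥0∞) := min_le_left _ _
        have hδρ : δ ≤ ENNReal.ofReal (ρ - dt) := min_le_right _ _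
        -- pick a near-optimal witness for Ttil j
        have hlt : sInf {x : ℝ≥0∞ | ∃ i, i ≠ j ∧ ∃ t : ℝ, 0 ≤ t ∧
            Ttil i ≤ ENNReal.ofReal t ∧ Icc t (t + ρ) ⊆ Ncon i j ∧
            x = ENNReal.ofReal (t + ρ)} < Ttil j + δ := by
          rw [← hTtil j hji0]
          exact ENNReal.lt_add_right hjfin hδpos
        obtain ⟨x, hxS, hxlt⟩ := sInf_lt_iff.mp hlt
        obtain ⟨i, hij, t, ht0, hTi, hsub, rfl⟩ := hxS
        have hTj_le : Ttil j ≤ ENNReal.ofReal (t + ρ) := by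
          rw [hTtil j hji0]
          exact sInf_le ⟨i, hij, t, ht0, hTi, hsub, rfl⟩
        -- t + ρ is close to Ttil j : t < (k+1)dt < t + ρ
        have hub : ENNReal.ofReal (t + ρ) <
            ENNReal.ofReal (((k + 1 : ℕ) : ℝ) * dt + ρ) := by
          calc ENNReal.ofReal (t + ρ) < Ttil j + δ := hxlt
            _ ≤ ENNReal.ofReal (((k : ℝ) + 1 + 1) * dt) + ENNReal.ofReal (ρ - dt) := by
              refine add_le_add (hle.trans (le_of_eq ?_)) hδρ
              push_cast; ring_nf
            _ = ENNReal.ofReal (((k : ℝ) + 1 + 1) * dt + (ρ - dt)) :=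
              (ENNReal.ofReal_add (by positivity) (by linarith)).symm
            _ = ENNReal.ofReal (((k + 1 : ℕ) : ℝ) * dt + ρ) := by
              rw [hMeq]; ring_nf
        have htub : t + ρ < ((k + 1 : ℕ) : ℝ) * dt + ρ :=
          (ENNReal.ofReal_lt_ofReal_iff_of_nonneg (by linarith)).mp hub
        have htlb : ((k + 1 : ℕ) : ℝ) * dt < t + ρ := by
          have := lt_of_lt_of_le hcase hTj_le
          rw [← hMeq] at this
          exact (ENNReal.ofReal_lt_ofReal_iff_of_nonneg hM0).mp this
        have hM : (((k + 1 : ℕ) : ℝ) * dt) ∈ Ncon i j :=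
          hsub ⟨by linarith, le_of_lt htlb⟩
        -- agent i is infected by time (k+1)dt and the IH applies
        have hTiM : Ttil i ≤ ENNReal.ofReal (((k : ℝ) + 1) * dt) := by
          refine hTi.trans (ENNReal.ofReal_le_ofReal ?_)
          rw [← hMeq]; linarith
        have hTieq := (ih i).2 hTiM
        have hTki : T k i ≤ ENNReal.ofReal (((k + 1 : ℕ) : ℝ) * dt) := by
          rw [← hTieq, hMeq]; exact hTiM
        -- maximality of the interval [a,b]
        obtain ⟨ha, hb, hsub', hmax⟩ := hab i j (k + 1) hM
        obtain ⟨hat, htb⟩ := hmax t (t + ρ) (by linarith) (by linarith) hsub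
        set t₁ : ℝ := max (a i j (k + 1)) (T k i).toReal with ht₁def
        have hTkit : (T k i).toReal ≤ t := by
          rw [← hTieq]
          exact ENNReal.toReal_le_of_le_ofReal ht0 hTi
        have ht₁t : t₁ ≤ t := max_le hat hTkit
        have hD : sInf {x : ℝ≥0∞ | ∃ i, i ≠ j ∧
            T k i ≤ ENNReal.ofReal (((k + 1 : ℕ) : ℝ) * dt) ∧
            (((k + 1 : ℕ) : ℝ) * dt) ∈ Ncon i j ∧
            ∃ t₁' : ℝ, t₁' = max (a i j (k + 1)) (T k i).toReal ∧
              ρ ≤ b i j (k + 1) - t₁' ∧ x = ENNReal.ofReal (t₁' + ρ)}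
            ≤ ENNReal.ofReal (t₁ + ρ) :=
          sInf_le ⟨i, hij, hTki, hM, t₁, rfl, by linarith, rfl⟩
        calc T (k + 1) j ≤ _ := by rw [hs j]; exact min_le_right _ _
          _ ≤ ENNReal.ofReal (t₁ + ρ) := hD
          _ ≤ ENNReal.ofReal (t + ρ) := ENNReal.ofReal_le_ofReal (by linarith)
          _ ≤ Ttil j + δ := le_of_lt hxlt
          _ ≤ Ttil j + ε := by gcongr
  -- conclude, fixing up the `k - 1` indexing
  intro k j
  match k with
  | 0 =>
    obtain ⟨h1, h2⟩ := key 0 j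
    refine ⟨h1, fun h => h2 (h.trans ?_)⟩
    exact ENNReal.ofReal_le_ofReal (by norm_num; positivity)
  | (n + 1) =>
    obtain ⟨h1, h2⟩ := key n j
    simp only [Nat.add_sub_cancel]
    refine ⟨h1, fun h => h2 ?_⟩
    convert h using 3
    push_cast; ring
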